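/- Let U : V → V be a ℂ-linear map such that ‖U u‖ = ‖u‖ for all u ∈ V and U(∂u/∂x_i) = ∂(U u)/∂x_i for i = 1,2,3. Let 0 < δ < 1 and let ν ∈ V satisfy |ν(x)| ≤ δ for all x. Denote by T : V → V the map T f = U(ν·f). Then for every integer k ≥ 1, every r ∈ {1,2,3}, and every f ∈ V, one has ‖∂(T^k f)/∂x_r‖ ≤ δ^k ‖∂f/∂x_r‖ + k δ^{k−1} (sup_x |∂ν/∂x_r(x)|)·‖f‖. In particular, ‖∂(T^k f)/∂x_r‖ ≤ c·k·δ^{k−1}·(‖f‖ + ‖∂f/∂x_r‖) with c = δ + sup|∂ν/∂x_r|. -/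

import Mathlib

open Real Complex MeasureTheory
open scoped ENNReal

noncomputable section

/-- Points of `ℝ³`. -/
abbrev R3 : Type := Fin 3 → ℝ

/-- A function on `ℝ³` is periodic if it is invariant under translation by `2π`
in each coordinate (so it descends to the torus `T³ = ℝ³/2πℤ³`). -/
def Periodic3 (u : R3 → ℂ) : Prop :=
  ∀ (x : R3) (i : Fin 3), u (x + Pi.single i (2 * Real.pi)) = u x

/-- Partial derivative in the `i`-th coordinate direction. -/
noncomputable def pd (i : Fin 3) (u : R3 → ℂ) (x : R3) : ℂ :=
  fderiv ℝ u x (Pi.single i 1)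

/-- `D_z u = (1/2)(∂u/∂x₁ − i ∂u/∂x₂) + ((a₁ − i a₂)/2) ∂u/∂x₃`. -/
noncomputable def Dz (a₁ a₂ : ℝ) (u : R3 → ℂ) (x : R3) : ℂ :=
  (1 / 2) * (pd 0 u x - Complex.I * pd 1 u x)
    + (((a₁ : ℂ) - Complex.I * (a₂ : ℂ)) / 2) * pd 2 u x

/-- `D_z̄ u = (1/2)(∂u/∂x₁ + i ∂u/∂x₂) + ((a₁ + i a₂)/2) ∂u/∂x₃`. -/
noncomputable def Dzbar (a₁ a₂ : ℝ) (u : R3 → ℂ) (x : R3) : ℂ :=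
  (1 / 2) * (pd 0 u x + Complex.I * pd 1 u x)
    + (((a₁ : ℂ) + Complex.I * (a₂ : ℂ)) / 2) * pd 2 u x

/-- Membership in `V`: `C^∞` functions `ℝ³ → ℂ` invariant under translation by `2π`
in each coordinate (i.e. functions on the torus `T³`). -/
def MemV (u : R3 → ℂ) : Prop :=
  ContDiff ℝ (⊤ : ℕ∞) u ∧ Periodic3 u

/-- The `L²` norm `‖u‖ = (∫_{[0,2π]³} |u(x)|² dx)^{1/2}`. -/
noncomputable def l2norm (u : R3 → ℂ) : ℝ :=
  Real.sqrt (∫ x in Set.Icc (0 : R3) (fun _ => 2 * Real.pi), ‖u x‖ ^ 2)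

/-- Inequality (10) in the proof of Proposition 1: if `U : V → V` is ℂ-linear,
preserves the `L²` norm and commutes with the partial derivatives, `|ν| ≤ δ < 1`,
and `T f = U (ν·f)`, then
`‖∂(T^k f)/∂x_r‖ ≤ δ^k ‖∂f/∂x_r‖ + k δ^{k−1} (sup |∂ν/∂x_r|) ‖f‖`, and in particular
`‖∂(T^k f)/∂x_r‖ ≤ c k δ^{k−1} (‖f‖ + ‖∂f/∂x_r‖)` with `c = δ + sup |∂ν/∂x_r|`. -/
def cube : Set R3 := Set.Icc (0 : R3) (fun _ => 2 * Real.pi)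

lemma cube_compact : IsCompact cube := isCompact_Icc

instance : IsFiniteMeasure (volume.restrict cube) :=
  ⟨by rw [Measure.restrict_apply_univ]; exact cube_compact.measure_lt_top⟩

lemma memL2 {u : R3 → ℂ} (hu : Continuous u) : MemLp u 2 (volume.restrict cube) := by
  obtain ⟨C, hC⟩ := cube_compact.exists_bound_of_continuousOn hu.continuousOn
  exact MemLp.of_bound hu.aestronglyMeasurable C
    ((ae_restrict_iff' measurableSet_Icc).2 (ae_of_all _ hC))

lemma l2norm_eq {u : R3 → ℂ} (hu : Continuous u) :
    l2norm u = (eLpNorm u 2 (volume.restrict cube)).toReal := by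
  rw [(memL2 hu).eLpNorm_eq_integral_rpow_norm two_ne_zero ENNReal.ofNat_ne_top,
    ENNReal.toReal_ofReal (Real.rpow_nonneg
      (integral_nonneg fun a => Real.rpow_nonneg (norm_nonneg _) _) _)]
  unfold l2norm
  rw [Real.sqrt_eq_rpow]
  have h2 : ((2:ℝ≥0∞)).toReal = (2:ℝ) := by simp
  rw [h2]
  have h3 : (∫ x in Set.Icc (0 : R3) (fun _ => 2 * Real.pi), ‖u x‖ ^ 2)
      = ∫ a in cube, ‖u a‖ ^ (2:ℝ) := by
    refine setIntegral_congr_fun measurableSet_Icc fun x _ => ?_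
    rw [show (2:ℝ) = ((2:ℕ):ℝ) by norm_num, Real.rpow_natCast]
  rw [h3]
  norm_num

lemma l2norm_nonneg (u : R3 → ℂ) : 0 ≤ l2norm u := Real.sqrt_nonneg _

lemma l2norm_add_le {u v : R3 → ℂ} (hu : Continuous u) (hv : Continuous v) :
    l2norm (u + v) ≤ l2norm u + l2norm v := by
  rw [l2norm_eq (u := u + v) (hu.add hv), l2norm_eq hu, l2norm_eq hv]
  rw [← ENNReal.toReal_add (memL2 hu).eLpNorm_ne_top (memL2 hv).eLpNorm_ne_top]
  exact ENNReal.toReal_mono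
    (ENNReal.add_ne_top.2 ⟨(memL2 hu).eLpNorm_ne_top, (memL2 hv).eLpNorm_ne_top⟩)
    (eLpNorm_add_le hu.aestronglyMeasurable hv.aestronglyMeasurable one_le_two)

lemma l2norm_mono_mul {u v : R3 → ℂ} {C : ℝ} (hC : 0 ≤ C) (hu : Continuous u)
    (hv : Continuous v) (h : ∀ x, ‖u x‖ ≤ C * ‖v x‖) :
    l2norm u ≤ C * l2norm v := by
  rw [l2norm_eq hu, l2norm_eq hv]
  have h1 : eLpNorm u 2 (volume.restrict cube) ≤ eLpNorm (C • v) 2 (volume.restrict cube) := by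
    apply eLpNorm_mono
    intro x
    simp only [Pi.smul_apply, norm_smul, Real.norm_eq_abs, _root_.abs_of_nonneg hC]
    simpa using h x
  rw [eLpNorm_const_smul] at h1
  calc (eLpNorm u 2 (volume.restrict cube)).toReal
      ≤ ((‖C‖₊ : ℝ≥0∞) * eLpNorm v 2 (volume.restrict cube)).toReal :=
        ENNReal.toReal_mono (ENNReal.mul_ne_top ENNReal.coe_ne_top (memL2 hv).eLpNorm_ne_top) h1
    _ = C * (eLpNorm v 2 (volume.restrict cube)).toReal := by
        rw [ENNReal.toReal_mul]
        simp [_root_.abs_of_nonneg hC]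

lemma pd_contDiff {u : R3 → ℂ} (hu : ContDiff ℝ (⊤:ℕ∞) u) (i : Fin 3) :
    ContDiff ℝ (⊤:ℕ∞) (pd i u) :=
  (hu.fderiv_right (by simp)).clm_apply contDiff_const

lemma pd_periodic3 {u : R3 → ℂ} (hu : ContDiff ℝ (⊤:ℕ∞) u) (hp : Periodic3 u) (i : Fin 3) :
    Periodic3 (pd i u) := by
  intro x j
  set c : R3 := Pi.single j (2 * Real.pi) with hc
  have h2 : HasFDerivAt u (fderiv ℝ u (x + c)) (x + c) :=
    (hu.differentiable (by simp) (x + c)).hasFDerivAt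
  have h1 : HasFDerivAt (fun y : R3 => y + c) (ContinuousLinearMap.id ℝ R3) x :=
    (hasFDerivAt_id x).add_const c
  have h3 : HasFDerivAt (fun y => u (y + c)) (fderiv ℝ u (x + c)) x := by
    exact h2.comp x h1
  have h4 : (fun y => u (y + c)) = u := funext fun y => hp y j
  rw [h4] at h3
  unfold pd
  rw [h3.fderiv]

lemma memV_pd {u : R3 → ℂ} (hu : MemV u) (i : Fin 3) : MemV (pd i u) :=
  ⟨pd_contDiff hu.1 i, pd_periodic3 hu.1 hu.2 i⟩

lemma memV_mul {u v : R3 → ℂ} (hu : MemV u) (hv : MemV v) : MemV (fun x => u x * v x) :=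
  ⟨hu.1.mul hv.1, fun x i => by simp only [hu.2 x i, hv.2 x i]⟩

lemma pd_mul {u v : R3 → ℂ} (hu : ContDiff ℝ (⊤:ℕ∞) u) (hv : ContDiff ℝ (⊤:ℕ∞) v) (i : Fin 3) :
    pd i (fun x => u x * v x) = fun x => pd i u x * v x + u x * pd i v x := by
  funext x
  unfold pd
  rw [fderiv_fun_mul (hu.differentiable (by simp)).differentiableAt
    (hv.differentiable (by simp)).differentiableAt]
  simp only [ContinuousLinearMap.add_apply, ContinuousLinearMap.smul_apply, smul_eq_mul]
  ring

lemma update_helper {β : Type*} (g : R3 → β)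
    (hg : ∀ x i, g (x + Pi.single i (2 * Real.pi)) = g x) (x : R3) (i : Fin 3) :
    ∃ t ∈ Set.Icc (0:ℝ) (2 * Real.pi), g (Function.update x i t) = g x := by
  have hper : Function.Periodic (fun t => g (Function.update x i t)) (2 * Real.pi) := by
    intro t
    have h : Function.update x i (t + 2 * Real.pi)
        = Function.update x i t + Pi.single i (2 * Real.pi) := by
      funext j
      by_cases hj : j = i
      · subst hj; simp
      · simp [Function.update_of_ne hj, Pi.single_eq_of_ne hj]
    simp only [h, hg]
  have hpi := Real.pi_pos
  refine ⟨2 * Real.pi * Int.fract (x i / (2 * Real.pi)), ⟨?_, ?_⟩, ?_⟩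
  · exact mul_nonneg (by positivity) (Int.fract_nonneg _)
  · nlinarith [Int.fract_lt_one (x i / (2 * Real.pi)), Int.fract_nonneg (x i / (2 * Real.pi))]
  · have h2 : 2 * Real.pi * Int.fract (x i / (2 * Real.pi))
        = x i - (⌊x i / (2 * Real.pi)⌋ : ℤ) * (2 * Real.pi) := by
      rw [Int.fract]
      field_simp
    rw [h2, hper.sub_int_mul_eq]
    simp

lemma periodic3_range_subset {β : Type*} (g : R3 → β)
    (hg : ∀ x i, g (x + Pi.single i (2 * Real.pi)) = g x) :
    Set.range g ⊆ g '' cube := by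
  rintro _ ⟨x, rfl⟩
  obtain ⟨t0, ht0, he0⟩ := update_helper g hg x 0
  set x1 := Function.update x 0 t0 with hx1
  obtain ⟨t1, ht1, he1⟩ := update_helper g hg x1 1
  set x2 := Function.update x1 1 t1 with hx2
  obtain ⟨t2, ht2, he2⟩ := update_helper g hg x2 2
  set x3 := Function.update x2 2 t2 with hx3
  refine ⟨x3, ?_, by rw [he2, he1, he0]⟩
  have hv0 : x3 0 = t0 := by simp [hx3, hx2, hx1]
  have hv1 : x3 1 = t1 := by simp [hx3, hx2]
  have hv2 : x3 2 = t2 := by simp [hx3]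
  constructor <;> intro i <;> fin_cases i <;>
    simp_all [Set.mem_Icc]

lemma abs_pd_le_ciSup {ν : R3 → ℂ} (hν : MemV ν) (r : Fin 3) (x : R3) :
    ‖pd r ν x‖ ≤ ⨆ y : R3, ‖pd r ν y‖ := by
  have hcont : Continuous fun y => ‖pd r ν y‖ :=
    continuous_norm.comp (pd_contDiff hν.1 r).continuous
  have hper := pd_periodic3 hν.1 hν.2 r
  have hbdd : BddAbove (Set.range fun y => ‖pd r ν y‖) :=
    BddAbove.mono (periodic3_range_subset _ (fun y i => by rw [hper y i]))
      ((cube_compact.image hcont).bddAbove)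
  exact le_ciSup hbdd x

theorem proposition1_estimate (U : (R3 → ℂ) → (R3 → ℂ))
    (hU_mem : ∀ u, MemV u → MemV (U u))
    (hU_add : ∀ u v, MemV u → MemV v → U (u + v) = U u + U v)
    (hU_smul : ∀ (c : ℂ) (u), MemV u → U (c • u) = c • U u)
    (hU_iso : ∀ u, MemV u → l2norm (U u) = l2norm u)
    (hU_comm : ∀ u, MemV u → ∀ i : Fin 3, U (pd i u) = pd i (U u))
    (δ : ℝ) (hδ0 : 0 < δ) (hδ1 : δ < 1)
    (ν : R3 → ℂ) (hν : MemV ν) (hν_le : ∀ x, ‖ν x‖ ≤ δ) :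
    ∀ k : ℕ, 1 ≤ k → ∀ r : Fin 3, ∀ f : R3 → ℂ, MemV f →
      l2norm (pd r ((fun g : R3 → ℂ => U (fun x => ν x * g x))^[k] f))
        ≤ δ ^ k * l2norm (pd r f)
          + (k : ℝ) * δ ^ (k - 1) * (⨆ x : R3, ‖pd r ν x‖) * l2norm f ∧
      l2norm (pd r ((fun g : R3 → ℂ => U (fun x => ν x * g x))^[k] f))
        ≤ (δ + ⨆ x : R3, ‖pd r ν x‖) * (k : ℝ) * δ ^ (k - 1)
          * (l2norm f + l2norm (pd r f)) := by
  intro k hk r f hf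
  set M : ℝ := ⨆ x : R3, ‖pd r ν x‖ with hM
  have hM0 : 0 ≤ M := Real.iSup_nonneg fun x => norm_nonneg _
  have hMle : ∀ x, ‖pd r ν x‖ ≤ M := abs_pd_le_ciSup hν r
  set T : (R3 → ℂ) → (R3 → ℂ) := fun g => U (fun x => ν x * g x) with hT
  have key : ∀ n : ℕ, MemV (T^[n] f) ∧ l2norm (T^[n] f) ≤ δ ^ n * l2norm f ∧
      l2norm (pd r (T^[n] f))
        ≤ δ ^ n * l2norm (pd r f) + (n : ℝ) * δ ^ (n - 1) * M * l2norm f := by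
    intro n
    induction n with
    | zero => exact ⟨hf, by simp, by simp⟩
    | succ n ih =>
      obtain ⟨hg, hgn, hgp⟩ := ih
      set g := T^[n] f with hgdef
      have hit : T^[n+1] f = T g := Function.iterate_succ_apply' T n f
      have hmul : MemV (fun x => ν x * g x) := memV_mul hν hg
      have hTg : MemV (T g) := hU_mem _ hmul
      have hA : MemV (fun x => pd r ν x * g x) := memV_mul (memV_pd hν r) hg
      have hB : MemV (fun x => ν x * pd r g x) := memV_mul hν (memV_pd hg r)
      have hnorm : l2norm (T g) ≤ δ ^ (n+1) * l2norm f := by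
        have h1 : l2norm (T g) = l2norm (fun x => ν x * g x) := hU_iso _ hmul
        have h2 : l2norm (fun x => ν x * g x) ≤ δ * l2norm g :=
          l2norm_mono_mul hδ0.le hmul.1.continuous hg.1.continuous (fun x => by
            rw [norm_mul]
            exact mul_le_mul_of_nonneg_right (hν_le x) (norm_nonneg _))
        calc l2norm (T g) = l2norm (fun x => ν x * g x) := h1
          _ ≤ δ * l2norm g := h2
          _ ≤ δ * (δ ^ n * l2norm f) := mul_le_mul_of_nonneg_left hgn hδ0.le
          _ = δ ^ (n+1) * l2norm f := by ring
      have hpd : l2norm (pd r (T g))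
          ≤ δ ^ (n+1) * l2norm (pd r f) + ((n:ℝ)+1) * δ ^ n * M * l2norm f := by
        have e1 : pd r (T g) = U (pd r (fun x => ν x * g x)) := (hU_comm _ hmul r).symm
        have e2 : pd r (fun x => ν x * g x)
            = (fun x => pd r ν x * g x) + (fun x => ν x * pd r g x) := by
          rw [pd_mul hν.1 hg.1 r]; rfl
        have e3 : U ((fun x => pd r ν x * g x) + (fun x => ν x * pd r g x))
            = U (fun x => pd r ν x * g x) + U (fun x => ν x * pd r g x) := hU_add _ _ hA hB
        have hUA := hU_mem _ hA
        have hUB := hU_mem _ hB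
        have tineq : l2norm (pd r (T g))
            ≤ l2norm (U fun x => pd r ν x * g x) + l2norm (U fun x => ν x * pd r g x) := by
          rw [e1, e2, e3]
          exact l2norm_add_le hUA.1.continuous hUB.1.continuous
        have bA : l2norm (U fun x => pd r ν x * g x) ≤ M * (δ ^ n * l2norm f) := by
          rw [hU_iso _ hA]
          calc l2norm (fun x => pd r ν x * g x) ≤ M * l2norm g :=
              l2norm_mono_mul hM0 hA.1.continuous hg.1.continuous (fun x => by
                rw [norm_mul]
                exact mul_le_mul_of_nonneg_right (hMle x) (norm_nonneg _))
            _ ≤ M * (δ ^ n * l2norm f) := mul_le_mul_of_nonneg_left hgn hM0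
        have bB : l2norm (U fun x => ν x * pd r g x)
            ≤ δ * (δ ^ n * l2norm (pd r f) + (n:ℝ) * δ ^ (n-1) * M * l2norm f) := by
          rw [hU_iso _ hB]
          calc l2norm (fun x => ν x * pd r g x) ≤ δ * l2norm (pd r g) :=
              l2norm_mono_mul hδ0.le hB.1.continuous (memV_pd hg r).1.continuous (fun x => by
                rw [norm_mul]
                exact mul_le_mul_of_nonneg_right (hν_le x) (norm_nonneg _))
            _ ≤ _ := mul_le_mul_of_nonneg_left hgp hδ0.le
        have hpow : δ * ((n:ℝ) * δ ^ (n-1)) = (n:ℝ) * δ ^ n := by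
          cases n with
          | zero => simp
          | succ m =>
            simp only [Nat.add_sub_cancel]
            push_cast
            ring
        calc l2norm (pd r (T g))
            ≤ l2norm (U fun x => pd r ν x * g x) + l2norm (U fun x => ν x * pd r g x) := tineq
          _ ≤ M * (δ ^ n * l2norm f)
              + δ * (δ ^ n * l2norm (pd r f) + (n:ℝ) * δ ^ (n-1) * M * l2norm f) :=
            add_le_add bA bB
          _ = δ ^ (n+1) * l2norm (pd r f)
              + ((δ * ((n:ℝ) * δ ^ (n-1))) * M * l2norm f + M * δ ^ n * l2norm f) := by ring
          _ = δ ^ (n+1) * l2norm (pd r f) + ((n:ℝ)+1) * δ ^ n * M * l2norm f := by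
            rw [hpow]; ring
      refine ⟨hit ▸ hTg, hit ▸ hnorm, ?_⟩
      rw [hit]
      simpa [Nat.add_sub_cancel] using hpd
  obtain ⟨-, -, h1⟩ := key k
  refine ⟨h1, h1.trans ?_⟩
  have hP := l2norm_nonneg (pd r f)
  have hF := l2norm_nonneg f
  have hk1 : (1:ℝ) ≤ (k:ℝ) := by exact_mod_cast hk
  have hd : 0 ≤ δ ^ (k-1) := pow_nonneg hδ0.le _
  have hpk : δ ^ k = δ * δ ^ (k-1) := by
    conv_lhs => rw [show k = (k-1)+1 by omega]
    ring
  rw [hpk]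
  nlinarith [mul_nonneg hd hF, mul_nonneg hd hP, mul_nonneg (mul_nonneg hd hP) hM0,
    mul_nonneg (mul_nonneg hd hF) hM0, mul_nonneg (mul_nonneg hd hP) hδ0.le,
    mul_nonneg (mul_nonneg hd hF) hδ0.le,
    mul_nonneg (mul_nonneg (mul_nonneg hd hF) hM0) (sub_nonneg.2 hk1),
    mul_nonneg (mul_nonneg (mul_nonneg hd hP) hM0) (sub_nonneg.2 hk1),
    mul_nonneg (mul_nonneg (mul_nonneg hd hF) hδ0.le) (sub_nonneg.2 hk1),
    mul_nonneg (mul_nonneg (mul_nonneg hd hP) hδ0.le) (sub_nonneg.2 hk1)]
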